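/- Injectivity of the Spatial Radon Transform on Systems of Lines (Theorem 4.2, measure form): Let d, d_θ, k ≥ 1, let h : ℝ^d → ℝ^{d_θ} be an injective continuous map, and let α : ℝ^{d_θ} × (ℝ^{d_θ} × S^{d_θ-1})^k → Δ_{k-1} be an E(d_θ)-invariant splitting map. Let μ, ν be finite Borel measures on ℝ^d. If for every system of k lines 𝓛 = ((x_1,θ_1),…,(x_k,θ_k)) in ℝ^{d_θ} and every index i ∈ {1,…,k}, the i-th branch of the Spatial Radon Transform on Systems of Lines of μ equals the i-th branch of the Spatial Radon Transform on Systems of Lines of ν, then μ = ν. -/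

import Mathlib

open MeasureTheory
open scoped InnerProductSpace

noncomputable section

/-- `d`-dimensional Euclidean space. -/
abbrev Euc (d : ℕ) := EuclideanSpace ℝ (Fin d)

/-- The unit sphere `S^{d-1}` in `ℝ^d`. -/
abbrev Sph (d : ℕ) := Metric.sphere (0 : Euc d) 1

/-- A system of `k` lines in `ℝ^d`: each line is a pair (source, direction). -/
abbrev LineSystem (d k : ℕ) := Fin k → Euc d × Sph d

/-- The action of a linear isometry equivalence on the unit sphere. -/
def sphIso {d : ℕ} (Q : Euc d ≃ₗᵢ[ℝ] Euc d) (θ : Sph d) : Sph d :=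
  ⟨Q (θ : Euc d), by
    rw [mem_sphere_zero_iff_norm, Q.norm_map]
    exact mem_sphere_zero_iff_norm.mp θ.2⟩

/-- The action of the Euclidean group `E(d)` (an isometry `Q` together with a
translation `a`) on a system of lines. -/
def actLine {d k : ℕ} (Q : Euc d ≃ₗᵢ[ℝ] Euc d) (a : Euc d) (L : LineSystem d k) :
    LineSystem d k :=
  fun i => (Q (L i).1 + a, sphIso Q (L i).2)

/-- The `i`-th branch of the Spatial Radon Transform on Systems of Lines of a
measure `μ`: push forward the measure `μ` weighted with density `α(h(·),𝓛)_i`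
under `y ↦ ⟪h(y) − x_i, θ_i⟫`. -/
def spatialBranch {d dθ k : ℕ} (h : Euc d → Euc dθ)
    (α : Euc dθ × LineSystem dθ k → Fin k → ℝ)
    (L : LineSystem dθ k) (i : Fin k) (μ : Measure (Euc d)) : Measure ℝ :=
  (μ.withDensity fun y => ENNReal.ofReal (α (h y, L) i)).map
    (fun y => ⟪h y - (L i).1, ((L i).2 : Euc dθ)⟫_ℝ)

open scoped FourierTransform ContDiff Topology Manifold

namespace SRTAux

variable {n : ℕ}

/-- A smooth compactly supported function is a Schwartz function. -/
def toSchwartz (f : Euc n → ℂ) (hf : ContDiff ℝ ∞ f) (h2 : HasCompactSupport f) :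
    SchwartzMap (Euc n) ℂ where
  toFun := f
  smooth' := hf
  decay' := by
    intro p q
    have h3 : HasCompactSupport fun x : Euc n => ‖x‖ ^ p * ‖iteratedFDeriv ℝ q f x‖ := by
      exact HasCompactSupport.mul_left ((h2.iteratedFDeriv q).norm)
    have hc : Continuous fun x : Euc n => ‖x‖ ^ p * ‖iteratedFDeriv ℝ q f x‖ :=
      (continuous_norm.pow p).mul
        ((hf.continuous_iteratedFDeriv (by exact_mod_cast le_top)).norm)
    obtain ⟨C, hC⟩ := hc.bounded_above_of_compact_support h3
    exact ⟨C, fun x => (le_abs_self _).trans ((Real.norm_eq_abs _) ▸ hC x)⟩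

@[simp] lemma toSchwartz_coe (f : Euc n → ℂ) (hf : ContDiff ℝ ∞ f)
    (h2 : HasCompactSupport f) : ⇑(toSchwartz f hf h2) = f := rfl

/-- A finite measure on Euclidean space is determined by its characteristic function. -/
theorem ext_of_char (μ ν : Measure (Euc n)) [IsFiniteMeasure μ] [IsFiniteMeasure ν]
    (hchar : ∀ ξ : Euc n,
      ∫ z, (Real.fourierChar (-⟪z, ξ⟫_ℝ) : ℂ) ∂μ
        = ∫ z, (Real.fourierChar (-⟪z, ξ⟫_ℝ) : ℂ) ∂ν) :
    μ = ν := by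
  -- total masses agree
  have huniv : μ Set.univ = ν Set.univ := by
    have h0 := hchar 0
    simp only [inner_zero_right, neg_zero, AddChar.map_zero_eq_one, Circle.coe_one,
      integral_const, Complex.real_smul, mul_one] at h0
    rw [Complex.ofReal_inj] at h0
    exact (ENNReal.toReal_eq_toReal_iff' (measure_ne_top μ _) (measure_ne_top ν _)).mp h0
  -- Step 1: integrals of Fourier transforms of integrable functions agree
  have key1 : ∀ g : Euc n → ℂ, Integrable g volume →
      ∫ z, 𝓕 g z ∂μ = ∫ z, 𝓕 g z ∂ν := by
    intro g hg
    have hL : Continuous fun p : Euc n × Euc n => innerₗ (Euc n) p.1 p.2 := continuous_inner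
    have hflip : (innerₗ (Euc n)).flip = innerₗ (Euc n) := by
      apply LinearMap.ext; intro x; apply LinearMap.ext; intro y
      simpa using real_inner_comm y x
    have hμ := VectorFourier.integral_bilin_fourierIntegral_eq_flip
      (L := innerₗ (Euc n)) (μ := μ) (ν := (volume : Measure (Euc n)))
      (ContinuousLinearMap.mul ℂ ℂ) Real.continuous_fourierChar hL
      (integrable_const (1 : ℂ)) hg
    have hν := VectorFourier.integral_bilin_fourierIntegral_eq_flip
      (L := innerₗ (Euc n)) (μ := ν) (ν := (volume : Measure (Euc n)))
      (ContinuousLinearMap.mul ℂ ℂ) Real.continuous_fourierChar hL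
      (integrable_const (1 : ℂ)) hg
    rw [hflip] at hμ hν
    have hch : VectorFourier.fourierIntegral Real.fourierChar μ (innerₗ (Euc n))
          (fun _ => (1 : ℂ))
        = VectorFourier.fourierIntegral Real.fourierChar ν (innerₗ (Euc n))
          (fun _ => (1 : ℂ)) := by
      funext ξ
      simpa [VectorFourier.fourierIntegral, Circle.smul_def] using hchar ξ
    simp only [ContinuousLinearMap.mul_apply', one_mul] at hμ hν
    rw [show (𝓕 g : Euc n → ℂ)
        = VectorFourier.fourierIntegral Real.fourierChar volume (innerₗ (Euc n)) g from rfl]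
    rw [← hμ, ← hν, hch]
  -- Step 2: integrals of smooth compactly supported functions agree
  have key2 : ∀ f : Euc n → ℂ, ContDiff ℝ ∞ f → HasCompactSupport f →
      ∫ z, f z ∂μ = ∫ z, f z ∂ν := by
    intro f hf h2
    set F := toSchwartz f hf h2 with hFdef
    set g := (FourierTransform.fourierCLE ℂ (SchwartzMap (Euc n) ℂ)).symm F with hgdef
    have hid : 𝓕 (⇑g) = ⇑F := by
      rw [← SchwartzMap.fourier_coe, ← FourierTransform.fourierCLE_apply (R := ℂ) g, hgdef,
        (FourierTransform.fourierCLE ℂ (SchwartzMap (Euc n) ℂ)).apply_symm_apply]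
    have hkey := key1 (⇑g) g.integrable
    rw [hid] at hkey
    exact hkey
  -- Step 3: measures of compact sets agree
  have key3 : ∀ K : Set (Euc n), IsCompact K → μ K = ν K := by
    intro K hK
    rcases K.eq_empty_or_nonempty with rfl | hKne
    · simp
    have main : ∀ δ : ℝ, 0 < δ →
        (μ K).toReal ≤ (ν (Metric.cthickening δ K)).toReal ∧
        (ν K).toReal ≤ (μ (Metric.cthickening δ K)).toReal := by
      intro δ hδ
      have hs_closed : IsClosed {z : Euc n | δ ≤ Metric.infDist z K} :=
        isClosed_le continuous_const (Metric.continuous_infDist_pt K)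
      have hdisj : Disjoint {z : Euc n | δ ≤ Metric.infDist z K} K := by
        rw [Set.disjoint_left]
        intro z hz hzK
        rw [Set.mem_setOf_eq, Metric.infDist_zero_of_mem hzK] at hz
        exact absurd hz (not_le.mpr hδ)
      obtain ⟨f, hf0, hf1, hf01⟩ := exists_contMDiffMap_zero_one_of_isClosed (n := (⊤ : ℕ∞)) (𝓘(ℝ, Euc n))
        hs_closed hK.isClosed hdisj
      have hfc : ContDiff ℝ ∞ ⇑f := contMDiff_iff_contDiff.mp f.contMDiff
      have hout : ∀ z : Euc n, z ∉ Metric.cthickening δ K → f z = 0 := by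
        intro z hz
        apply hf0
        rw [Set.mem_setOf_eq]
        by_contra hlt
        push_neg at hlt
        exact hz (Metric.thickening_subset_cthickening δ K
          ((Metric.mem_thickening_iff_infDist_lt hKne).mpr hlt))
      have hcs : HasCompactSupport ⇑f :=
        HasCompactSupport.intro (hK.cthickening) hout
      -- complex version
      have hfC : ContDiff ℝ ∞ fun z : Euc n => ((f z : ℝ) : ℂ) :=
        Complex.ofRealCLM.contDiff.comp hfc
      have hcsC : HasCompactSupport fun z : Euc n => ((f z : ℝ) : ℂ) := by
        apply HasCompactSupport.comp_left (g := fun r : ℝ => (r : ℂ)) hcs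
        simp
      have hIC := key2 _ hfC hcsC
      have hre : ∀ (m : Measure (Euc n)), ∫ z, ((f z : ℝ) : ℂ) ∂m
          = ((∫ z, f z ∂m : ℝ) : ℂ) := fun m => integral_ofReal
      rw [hre μ, hre ν, Complex.ofReal_inj] at hIC
      -- hIC : ∫ z, f z ∂μ = ∫ z, f z ∂ν
      have hintμ : Integrable (⇑f) μ := hfc.continuous.integrable_of_hasCompactSupport hcs
      have hintν : Integrable (⇑f) ν := hfc.continuous.integrable_of_hasCompactSupport hcs
      have hmc : MeasurableSet (Metric.cthickening δ K) :=
        Metric.isClosed_cthickening.measurableSet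
      have hlow : ∀ (m : Measure (Euc n)), IsFiniteMeasure m → Integrable (⇑f) m →
          (m K).toReal ≤ ∫ z, f z ∂m := by
        intro m hfin hm
        haveI := hfin
        change m.real K ≤ _
        rw [← integral_indicator_one hK.measurableSet]
        apply integral_mono ((integrable_const (1:ℝ)).indicator hK.measurableSet) hm
        intro z
        by_cases hz : z ∈ K
        · simp [Set.indicator_of_mem hz, hf1 hz]
        · simpa [Set.indicator_of_notMem hz] using (hf01 z).1
      have hup : ∀ (m : Measure (Euc n)), IsFiniteMeasure m → Integrable (⇑f) m →
          ∫ z, f z ∂m ≤ (m (Metric.cthickening δ K)).toReal := by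
        intro m hfin hm
        haveI := hfin
        change _ ≤ m.real (Metric.cthickening δ K)
        rw [← integral_indicator_one hmc]
        apply integral_mono hm ((integrable_const (1:ℝ)).indicator hmc)
        intro z
        by_cases hz : z ∈ Metric.cthickening δ K
        · simpa [Set.indicator_of_mem hz] using (hf01 z).2
        · simp [Set.indicator_of_notMem hz, hout z hz]
      constructor
      · calc (μ K).toReal ≤ ∫ z, f z ∂μ := hlow μ inferInstance hintμ
          _ = ∫ z, f z ∂ν := hIC
          _ ≤ (ν (Metric.cthickening δ K)).toReal := hup ν inferInstance hintν
      · calc (ν K).toReal ≤ ∫ z, f z ∂ν := hlow ν inferInstance hintν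
          _ = ∫ z, f z ∂μ := hIC.symm
          _ ≤ (μ (Metric.cthickening δ K)).toReal := hup μ inferInstance hintμ
    -- pass to the limit δ → 0
    set C : ℕ → Set (Euc n) := fun m => Metric.cthickening (1 / (m + 1 : ℝ)) K with hCdef
    have hpos : ∀ m : ℕ, (0:ℝ) < 1 / (m + 1 : ℝ) := by
      intro m; positivity
    have hanti : Antitone C := by
      intro a b hab
      apply Metric.cthickening_mono
      have hcast : (a : ℝ) + 1 ≤ (b : ℝ) + 1 := by
        have := (Nat.cast_le (α := ℝ)).mpr hab; linarith
      exact one_div_le_one_div_of_le (by positivity) hcast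
    have hinter : ⋂ m, C m = K := by
      apply Set.Subset.antisymm
      · intro z hz
        rw [Set.mem_iInter] at hz
        have h0 : EMetric.infEdist z K = 0 := by
          refine le_antisymm ?_ zero_le
          have htd : Filter.Tendsto (fun m : ℕ => ENNReal.ofReal (1 / (m + 1 : ℝ)))
              Filter.atTop (𝓝 0) := by
            simpa using ENNReal.tendsto_ofReal tendsto_one_div_add_atTop_nhds_zero_nat
          refine ge_of_tendsto' htd ?_
          intro m
          exact hz m
        have : z ∈ closure K := EMetric.mem_closure_iff_infEdist_zero.mpr h0
        rwa [hK.isClosed.closure_eq] at this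
      · intro z hz
        exact Set.mem_iInter.mpr fun m => Metric.self_subset_cthickening K hz
    have hmeasC : ∀ m, NullMeasurableSet (C m) μ := fun m =>
      Metric.isClosed_cthickening.measurableSet.nullMeasurableSet
    have hmeasCν : ∀ m, NullMeasurableSet (C m) ν := fun m =>
      Metric.isClosed_cthickening.measurableSet.nullMeasurableSet
    have hμlim : Filter.Tendsto (fun m => (μ (C m)).toReal) Filter.atTop (𝓝 ((μ K).toReal)) := by
      have h1 := tendsto_measure_iInter_atTop hmeasC hanti ⟨0, measure_ne_top μ _⟩
      rw [hinter] at h1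
      exact (ENNReal.tendsto_toReal (measure_ne_top μ K)).comp h1
    have hνlim : Filter.Tendsto (fun m => (ν (C m)).toReal) Filter.atTop (𝓝 ((ν K).toReal)) := by
      have h1 := tendsto_measure_iInter_atTop hmeasCν hanti ⟨0, measure_ne_top ν _⟩
      rw [hinter] at h1
      exact (ENNReal.tendsto_toReal (measure_ne_top ν K)).comp h1
    have h1 : (μ K).toReal ≤ (ν K).toReal :=
      ge_of_tendsto hνlim (Filter.Eventually.of_forall fun m => (main _ (hpos m)).1)
    have h2 : (ν K).toReal ≤ (μ K).toReal :=
      ge_of_tendsto hμlim (Filter.Eventually.of_forall fun m => (main _ (hpos m)).2)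
    exact (ENNReal.toReal_eq_toReal_iff' (measure_ne_top μ _) (measure_ne_top ν _)).mp
      (le_antisymm h1 h2)
  -- Step 4: measures of closed sets agree
  have key4 : ∀ F : Set (Euc n), IsClosed F → μ F = ν F := by
    intro F hF
    have hU : ⋃ m : ℕ, F ∩ Metric.closedBall 0 m = F := by
      ext z
      simp only [Set.mem_iUnion, Set.mem_inter_iff, Metric.mem_closedBall]
      constructor
      · rintro ⟨m, hz, _⟩; exact hz
      · intro hz
        obtain ⟨m, hm⟩ := exists_nat_ge (dist z 0)
        exact ⟨m, hz, hm⟩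
    have hmono : Monotone fun m : ℕ => F ∩ Metric.closedBall (0 : Euc n) m := by
      intro a b hab
      exact Set.inter_subset_inter_right F
        (Metric.closedBall_subset_closedBall (by exact_mod_cast hab))
    have hμt := tendsto_measure_iUnion_atTop (μ := μ) hmono
    have hνt := tendsto_measure_iUnion_atTop (μ := ν) hmono
    rw [hU] at hμt hνt
    have hcomp : (μ ∘ fun m : ℕ => F ∩ Metric.closedBall 0 m)
        = (ν ∘ fun m : ℕ => F ∩ Metric.closedBall 0 m) := by
      funext m
      exact key3 _ ((isCompact_closedBall (0 : Euc n) m).inter_left hF)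
    rw [hcomp] at hμt
    exact tendsto_nhds_unique hμt hνt
  exact MeasureTheory.ext_of_generate_finite _
    (BorelSpace.measurable_eq.trans borel_eq_generateFrom_isClosed) isPiSystem_isClosed
    (fun s hs => key4 s hs) huniv

end SRTAux

/-- Injectivity of the Spatial Radon Transform on Systems of Lines
(measure form). -/
theorem spatial_radon_transform_systems_of_lines_injective_measure
    (d dθ k : ℕ) (hd : 1 ≤ d) (hdθ : 1 ≤ dθ) (hk : 1 ≤ k)
    (h : Euc d → Euc dθ) (h_inj : Function.Injective h) (h_cont : Continuous h)
    (α : Euc dθ × LineSystem dθ k → Fin k → ℝ)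
    (hα_cont : Continuous α)
    (hα_simplex : ∀ p, α p ∈ stdSimplex ℝ (Fin k))
    (hα_inv : ∀ (Q : Euc dθ ≃ₗᵢ[ℝ] Euc dθ) (a z : Euc dθ) (L : LineSystem dθ k),
      α (Q z + a, actLine Q a L) = α (z, L))
    (μ ν : Measure (Euc d)) [IsFiniteMeasure μ] [IsFiniteMeasure ν]
    (heq : ∀ (L : LineSystem dθ k) (i : Fin k),
      spatialBranch h α L i μ = spatialBranch h α L i ν) :
    μ = ν := by
  classical
  have hmeas : Measurable h := h_cont.measurable
  -- a fixed unit vector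
  have hθ0 : ‖(EuclideanSpace.single (⟨0, hdθ⟩ : Fin dθ) (1 : ℝ) : Euc dθ)‖ = 1 := by
    rw [EuclideanSpace.norm_single]; norm_num
  set θ₀ : Sph dθ := ⟨_, mem_sphere_zero_iff_norm.mpr hθ0⟩ with hθ₀def
  -- Step 1: one-dimensional projections agree
  have hproj : ∀ θ : Sph dθ,
      μ.map (fun y => ⟪h y, (θ : Euc dθ)⟫_ℝ) = ν.map (fun y => ⟪h y, (θ : Euc dθ)⟫_ℝ) := by
    intro θ
    set L : LineSystem dθ k := fun _ => (0, θ) with hLdef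
    have hφc : Continuous fun y => ⟪h y, (θ : Euc dθ)⟫_ℝ := h_cont.inner continuous_const
    have hφm : Measurable fun y => ⟪h y, (θ : Euc dθ)⟫_ℝ := hφc.measurable
    have hfi : ∀ i : Fin k, Measurable fun y => ENNReal.ofReal (α (h y, L) i) := by
      intro i
      exact (((continuous_apply i).comp
        (hα_cont.comp (h_cont.prodMk continuous_const))).measurable).ennreal_ofReal
    ext B hB
    rw [Measure.map_apply hφm hB, Measure.map_apply hφm hB]
    set A := (fun y => ⟪h y, (θ : Euc dθ)⟫_ℝ) ⁻¹' B with hAdef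
    have hAm : MeasurableSet A := hφm hB
    have hbranch : ∀ (m : Measure (Euc d)) (i : Fin k),
        spatialBranch h α L i m B = ∫⁻ y in A, ENNReal.ofReal (α (h y, L) i) ∂m := by
      intro m i
      rw [spatialBranch]
      have hmap : (fun y => ⟪h y - (L i).1, ((L i).2 : Euc dθ)⟫_ℝ)
          = fun y => ⟪h y, (θ : Euc dθ)⟫_ℝ := by
        funext y
        show ⟪h y - 0, (θ : Euc dθ)⟫_ℝ = _
        rw [sub_zero]
      rw [hmap, Measure.map_apply hφm hB, withDensity_apply _ hAm]
    have hsum : ∀ y : Euc d, ∑ i : Fin k, ENNReal.ofReal (α (h y, L) i) = 1 := by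
      intro y
      rw [← ENNReal.ofReal_sum_of_nonneg (fun i _ => (hα_simplex (h y, L)).1 i),
        (hα_simplex (h y, L)).2, ENNReal.ofReal_one]
    have hcalc : ∀ m : Measure (Euc d), m A = ∑ i : Fin k, spatialBranch h α L i m B := by
      intro m
      have h1 : m A = ∫⁻ _ in A, 1 ∂m := (setLIntegral_one A).symm
      rw [h1]
      have h2 : ∫⁻ y in A, (1 : ENNReal) ∂m
          = ∫⁻ y in A, ∑ i : Fin k, ENNReal.ofReal (α (h y, L) i) ∂m := by
        apply lintegral_congr
        intro y
        rw [hsum y]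
      rw [h2, lintegral_finset_sum _ (fun i _ => hfi i)]
      exact Finset.sum_congr rfl fun i _ => (hbranch m i).symm
    rw [show μ A = ∑ i : Fin k, spatialBranch h α L i μ B from hcalc μ,
      show ν A = ∑ i : Fin k, spatialBranch h α L i ν B from hcalc ν]
    exact Finset.sum_congr rfl fun i _ => by rw [heq L i]
  -- Step 2: characteristic functions of the pushforwards agree
  haveI hfinμ' : IsFiniteMeasure (μ.map h) :=
    ⟨by rw [Measure.map_apply hmeas MeasurableSet.univ]; exact measure_lt_top μ _⟩
  haveI hfinν' : IsFiniteMeasure (ν.map h) :=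
    ⟨by rw [Measure.map_apply hmeas MeasurableSet.univ]; exact measure_lt_top ν _⟩
  have hchar : ∀ ξ : Euc dθ,
      ∫ z, (Real.fourierChar (-⟪z, ξ⟫_ℝ) : ℂ) ∂(μ.map h)
        = ∫ z, (Real.fourierChar (-⟪z, ξ⟫_ℝ) : ℂ) ∂(ν.map h) := by
    intro ξ
    have hchar_aux : ∀ (t : ℝ) (θ : Sph dθ) (hξθ : ξ = t • (θ : Euc dθ)),
        ∫ z, (Real.fourierChar (-⟪z, ξ⟫_ℝ) : ℂ) ∂(μ.map h)
          = ∫ z, (Real.fourierChar (-⟪z, ξ⟫_ℝ) : ℂ) ∂(ν.map h) := by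
      intro t θ hξθ
      have hdecomp : ∀ z : Euc dθ, ⟪z, ξ⟫_ℝ = t * ⟪z, (θ : Euc dθ)⟫_ℝ := by
        intro z; rw [hξθ, real_inner_smul_right]
      have hcont1 : Continuous fun z : Euc dθ => (Real.fourierChar (-⟪z, ξ⟫_ℝ) : ℂ) :=
        continuous_subtype_val.comp (Real.continuous_fourierChar.comp
          ((continuous_id.inner continuous_const).neg))
      have hcont2 : Continuous fun s : ℝ => (Real.fourierChar (-(t * s)) : ℂ) :=
        continuous_subtype_val.comp (Real.continuous_fourierChar.comp
          ((continuous_const.mul continuous_id).neg))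
      have hstep : ∀ (m : Measure (Euc d)),
          ∫ z, (Real.fourierChar (-⟪z, ξ⟫_ℝ) : ℂ) ∂(m.map h)
            = ∫ s, (Real.fourierChar (-(t * s)) : ℂ)
                ∂(m.map (fun y => ⟪h y, (θ : Euc dθ)⟫_ℝ)) := by
        intro m
        rw [integral_map hmeas.aemeasurable hcont1.aestronglyMeasurable,
          integral_map (h_cont.inner continuous_const).measurable.aemeasurable
            hcont2.aestronglyMeasurable]
        apply integral_congr_ae
        apply Filter.Eventually.of_forall
        intro y
        simp only [hdecomp]
      rw [hstep μ, hstep ν, hproj θ]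
    rcases eq_or_ne ξ 0 with rfl | hξ
    · exact hchar_aux 0 θ₀ (by rw [zero_smul])
    · have hnθ : ‖(‖ξ‖⁻¹ • ξ : Euc dθ)‖ = 1 := by
        rw [norm_smul, norm_inv, norm_norm]
        exact inv_mul_cancel₀ (norm_ne_zero_iff.mpr hξ)
      exact hchar_aux ‖ξ‖ ⟨‖ξ‖⁻¹ • ξ, mem_sphere_zero_iff_norm.mpr hnθ⟩
        (by simp [smul_smul, mul_inv_cancel₀ (norm_ne_zero_iff.mpr hξ)])
  -- Step 3: conclude
  have hmapeq : μ.map h = ν.map h := SRTAux.ext_of_char (μ.map h) (ν.map h) hchar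
  have hemb : MeasurableEmbedding h := h_cont.measurableEmbedding h_inj
  calc μ = (μ.map h).comap h := (hemb.comap_map μ).symm
    _ = (ν.map h).comap h := by rw [hmapeq]
    _ = ν := hemb.comap_map ν
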